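/- Let Y be a two-level ±1 design that is an OA(N,k,2,t) with N = λ·2^t, k ≥ t + 2, and λ odd. Then for every nonempty subset l ⊆ Fin k, the integer J(l)/2^t is odd if the binomial coefficient C(|l|−1, |l|−t−1) is odd, and is even otherwise; that is, J(l)/2^t ≡ C(|l|−1, |l|−t−1) (mod 2), where C(|l|−1, |l|−t−1) is interpreted as 0 when |l| ≤ t. -/

import Mathlib

/-- All entries of `Y` are `1` or `-1`. -/
def isPM {N k : ℕ} (Y : Fin N → Fin k → ℤ) : Prop :=
  ∀ i j, Y i j = 1 ∨ Y i j = -1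

/-- `Y` is a two-level orthogonal array OA(N,k,2,t): for every `t`-element set `T` of
columns and every `±1` sign pattern `ε`, the number of rows matching `ε` on `T`
equals `N / 2^t` (equivalently, the count times `2^t` equals `N`). -/
def isOA2 (N k t : ℕ) (Y : Fin N → Fin k → ℤ) : Prop :=
  ∀ T : Finset (Fin k), T.card = t →
    ∀ ε : Fin k → ℤ, (∀ j, ε j = 1 ∨ ε j = -1) →
      (Finset.univ.filter (fun i : Fin N => ∀ j ∈ T, Y i j = ε j)).card * 2 ^ t = N

/-- The `J`-characteristic of the set of columns `l`. -/
def Jchar {N k : ℕ} (Y : Fin N → Fin k → ℤ) (l : Finset (Fin k)) : ℤ :=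
  ∑ i : Fin N, ∏ j ∈ l, Y i j

lemma expandA {N k : ℕ} (Y : Fin N → Fin k → ℤ) (hpm : isPM Y) (l : Finset (Fin k)) :
    ∑ S ∈ l.powerset, Jchar Y S
      = ((Finset.univ.filter (fun i : Fin N => ∀ j ∈ l, Y i j = 1)).card : ℤ) * 2 ^ l.card := by
  unfold Jchar
  rw [Finset.sum_comm]
  have key : ∀ i : Fin N, ∑ S ∈ l.powerset, ∏ j ∈ S, Y i j
      = if (∀ j ∈ l, Y i j = 1) then (2:ℤ) ^ l.card else 0 := by
    intro i
    have h := Finset.prod_add (fun j => Y i j) (fun _ => (1:ℤ)) l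
    simp only [Finset.prod_const_one, mul_one] at h
    by_cases hc : ∀ j ∈ l, Y i j = 1
    · rw [if_pos hc, ← h]
      have h2 : ∀ j ∈ l, Y i j + 1 = 2 := fun j hj => by rw [hc j hj]; norm_num
      rw [Finset.prod_congr rfl h2, Finset.prod_const]
    · rw [if_neg hc, ← h]
      push_neg at hc
      obtain ⟨j, hj, hj1⟩ := hc
      have hj2 : Y i j = -1 := (hpm i j).resolve_left hj1
      exact Finset.prod_eq_zero hj (by rw [hj2]; ring)
  rw [Finset.sum_congr rfl (fun i _ => key i), Finset.sum_ite, Finset.sum_const,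
    Finset.sum_const_zero, add_zero, nsmul_eq_mul]

lemma countB {N k t : ℕ} (Y : Fin N → Fin k → ℤ) (hpm : isPM Y) (hoa : isOA2 N k t Y)
    (htk : t ≤ k) :
    ∀ d s, s + d = t → ∀ S : Finset (Fin k), S.card = s →
      ∀ ε : Fin k → ℤ, (∀ j, ε j = 1 ∨ ε j = -1) →
      (Finset.univ.filter (fun i : Fin N => ∀ j ∈ S, Y i j = ε j)).card * 2 ^ s = N := by
  intro d
  induction d with
  | zero =>
    intro s hs S hS ε hε
    have : s = t := by omega
    subst this
    exact hoa S hS ε hε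
  | succ d ih =>
    intro s hs S hS ε hε
    obtain ⟨j, hj⟩ : ∃ j, j ∉ S := by
      by_contra h
      push_neg at h
      have hsub : (Finset.univ : Finset (Fin k)) ⊆ S := fun x _ => h x
      have := Finset.card_le_card hsub
      simp [Finset.card_univ] at this
      omega
    have hiff : ∀ i, (∀ j' ∈ S, Y i j' = ε j') ↔
        ((∀ j' ∈ insert j S, Y i j' = Function.update ε j 1 j') ∨
         (∀ j' ∈ insert j S, Y i j' = Function.update ε j (-1) j')) := by
      intro i
      constructor
      · intro h
        have hmem : ∀ (v : ℤ), Y i j = v → ∀ j' ∈ insert j S, Y i j' = Function.update ε j v j' := by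
          intro v hv j' hj'
          rcases Finset.mem_insert.mp hj' with rfl | hj'S
          · simpa using hv
          · rw [Function.update_of_ne (ne_of_mem_of_not_mem hj'S hj)]
            exact h j' hj'S
        rcases hpm i j with h1 | h1
        · exact Or.inl (hmem 1 h1)
        · exact Or.inr (hmem (-1) h1)
      · rintro (h | h) j' hj'S <;>
        · have h2 := h j' (Finset.mem_insert_of_mem hj'S)
          rwa [Function.update_of_ne (ne_of_mem_of_not_mem hj'S hj)] at h2
    have hunion : Finset.univ.filter (fun i : Fin N => ∀ j' ∈ S, Y i j' = ε j')
        = (Finset.univ.filter (fun i : Fin N => ∀ j' ∈ insert j S, Y i j' = Function.update ε j 1 j'))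
          ∪ (Finset.univ.filter (fun i : Fin N => ∀ j' ∈ insert j S, Y i j' = Function.update ε j (-1) j')) := by
      rw [← Finset.filter_or]
      exact Finset.filter_congr (fun i _ => by rw [hiff i])
    have hdisj : Disjoint
        (Finset.univ.filter (fun i : Fin N => ∀ j' ∈ insert j S, Y i j' = Function.update ε j 1 j'))
        (Finset.univ.filter (fun i : Fin N => ∀ j' ∈ insert j S, Y i j' = Function.update ε j (-1) j')) := by
      rw [Finset.disjoint_left]
      intro i h1 h2
      rw [Finset.mem_filter] at h1 h2
      have e1 := h1.2 j (Finset.mem_insert_self j S)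
      have e2 := h2.2 j (Finset.mem_insert_self j S)
      simp at e1 e2
      rw [e1] at e2
      norm_num at e2
    have hcard : S.card < k := by
      have := Finset.card_le_card (Finset.subset_univ S)
      simp [Finset.card_univ] at this
      omega
    have hupd : ∀ (v : ℤ), v = 1 ∨ v = -1 →
        (∀ j', Function.update ε j v j' = 1 ∨ Function.update ε j v j' = -1) := by
      intro v hv j'
      rcases eq_or_ne j' j with rfl | hne
      · simpa using hv
      · rw [Function.update_of_ne hne]; exact hε j'
    have hSi : (insert j S).card = s + 1 := by rw [Finset.card_insert_of_notMem hj, hS]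
    have h1 := ih (s+1) (by omega) (insert j S) hSi (Function.update ε j 1) (hupd 1 (Or.inl rfl))
    have h2 := ih (s+1) (by omega) (insert j S) hSi (Function.update ε j (-1)) (hupd (-1) (Or.inr rfl))
    have hcards := Finset.card_union_of_disjoint hdisj
    rw [← hunion] at hcards
    have key : ((Finset.univ.filter (fun i : Fin N => ∀ j' ∈ S, Y i j' = ε j')).card * 2 ^ s) * 2
        = N * 2 := by
      calc ((Finset.univ.filter (fun i : Fin N => ∀ j' ∈ S, Y i j' = ε j')).card * 2 ^ s) * 2
          = (Finset.univ.filter (fun i : Fin N => ∀ j' ∈ insert j S, Y i j' = Function.update ε j 1 j')).card * 2 ^ (s+1)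
            + (Finset.univ.filter (fun i : Fin N => ∀ j' ∈ insert j S, Y i j' = Function.update ε j (-1) j')).card * 2 ^ (s+1) := by
            rw [hcards]; ring
        _ = N * 2 := by rw [h1, h2]; ring
    exact Nat.eq_of_mul_eq_mul_right (by norm_num) key

lemma JzeroC {N k t : ℕ} (Y : Fin N → Fin k → ℤ) (hpm : isPM Y) (hoa : isOA2 N k t Y)
    (htk : t ≤ k) :
    ∀ S : Finset (Fin k), S.Nonempty → S.card ≤ t → Jchar Y S = 0 := by
  intro S
  induction S using Finset.strongInduction with
  | _ S ih =>
    intro hne hcard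
    have hA := expandA Y hpm S
    have hB := countB Y hpm hoa htk (t - S.card) S.card (by omega) S rfl
      (fun _ => 1) (fun _ => Or.inl rfl)
    have hsub : ({∅, S} : Finset (Finset (Fin k))) ⊆ S.powerset := by
      intro x hx
      rcases Finset.mem_insert.mp hx with rfl | hx
      · exact Finset.mem_powerset.mpr (Finset.empty_subset S)
      · rw [Finset.mem_singleton] at hx
        rw [hx]
        exact Finset.mem_powerset_self S
    have hzero : ∀ S' ∈ S.powerset, S' ∉ ({∅, S} : Finset (Finset (Fin k))) → Jchar Y S' = 0 := by
      intro S' hS' hnot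
      simp only [Finset.mem_insert, Finset.mem_singleton, not_or] at hnot
      have hss : S' ⊂ S := Finset.ssubset_iff_subset_ne.mpr ⟨Finset.mem_powerset.mp hS', hnot.2⟩
      exact ih S' hss (Finset.nonempty_iff_ne_empty.mpr hnot.1)
        (le_trans (Finset.card_le_card hss.subset) hcard)
    have hsum := Finset.sum_subset hsub hzero
    rw [Finset.sum_pair (by simpa [eq_comm] using hne.ne_empty : (∅ : Finset (Fin k)) ≠ S)] at hsum
    have hJe : Jchar Y ∅ = (N:ℤ) := by simp [Jchar]
    rw [hJe, hA] at hsum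
    have hBZ : ((Finset.univ.filter (fun i : Fin N => ∀ j ∈ S, Y i j = 1)).card : ℤ) * 2 ^ S.card
        = (N:ℤ) := by exact_mod_cast congrArg (Nat.cast : ℕ → ℤ) hB
    -- hB's filter uses `= (fun _ => 1) j`; fix definitional mismatch
    linarith [hsum, hBZ]

lemma sumIdN (t c : ℕ) (hc : t ≤ c) :
    ∑ u ∈ Finset.range (c+1), c.choose u * u.choose t = c.choose t * 2^(c - t) := by
  have h1 : ∑ u ∈ Finset.range (c+1), c.choose u * u.choose t
      = ∑ u ∈ Finset.Ico t (c+1), c.choose u * u.choose t := by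
    rw [Finset.range_eq_Ico, ← Finset.sum_Ico_consecutive _ (Nat.zero_le t) (by omega)]
    have h0 : ∑ u ∈ Finset.Ico 0 t, c.choose u * u.choose t = 0 :=
      Finset.sum_eq_zero fun u hu => by
        rw [Nat.choose_eq_zero_of_lt (Finset.mem_Ico.mp hu).2, mul_zero]
    rw [h0, zero_add]
  rw [h1, Finset.sum_Ico_eq_sum_range]
  have h2 : ∀ v ∈ Finset.range (c + 1 - t), c.choose (t+v) * (t+v).choose t
      = c.choose t * (c-t).choose v := by
    intro v hv
    have hv' : t + v ≤ c := by have := Finset.mem_range.mp hv; omega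
    rw [Nat.choose_mul (Nat.le_add_right t v)]
    congr 1
    · congr 1
      omega
  rw [Finset.sum_congr rfl h2, ← Finset.mul_sum]
  have h3 : c + 1 - t = (c - t) + 1 := by omega
  rw [h3, Nat.sum_range_choose]

lemma fOddN (t c : ℕ) (hc : t + 1 ≤ c) :
    (∑ s ∈ Finset.range (c+1), if t < s then c.choose s * (s-1).choose t else 0) % 2 = 1 := by
  induction c, hc using Nat.le_induction with
  | base =>
    rw [Finset.sum_range_succ]
    have h0 : ∑ s ∈ Finset.range (t+1), (if t < s then (t+1).choose s * (s-1).choose t else 0) = 0 :=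
      Finset.sum_eq_zero fun s hs => if_neg (by have := Finset.mem_range.mp hs; omega)
    rw [h0]
    simp
  | succ c hc ih =>
    have pascal : ∀ s ∈ Finset.range (c+2),
        (if t < s then (c+1).choose s * (s-1).choose t else 0)
          = (if t < s then c.choose s * (s-1).choose t else 0)
            + (if t < s then c.choose (s-1) * (s-1).choose t else 0) := by
      intro s _
      by_cases h : t < s
      · simp only [if_pos h]
        have hs1 : s = (s-1) + 1 := by omega
        have h2 := Nat.choose_succ_succ' c (s-1)
        rw [← hs1] at h2
        rw [h2, Nat.add_mul, Nat.add_comm]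
      · simp [h]
    rw [Finset.sum_congr rfl pascal, Finset.sum_add_distrib]
    have first : ∑ s ∈ Finset.range (c+2), (if t < s then c.choose s * (s-1).choose t else 0)
        = ∑ s ∈ Finset.range (c+1), (if t < s then c.choose s * (s-1).choose t else 0) := by
      rw [Finset.sum_range_succ]
      have : c.choose (c+1) = 0 := Nat.choose_eq_zero_of_lt (by omega)
      simp [this]
    have second : ∑ s ∈ Finset.range (c+2), (if t < s then c.choose (s-1) * (s-1).choose t else 0)
        = c.choose t * 2^(c - t) := by
      rw [Finset.sum_range_succ']
      have hz : (if t < 0 then c.choose (0-1) * (0-1).choose t else 0) = 0 := by simp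
      rw [hz, add_zero]
      have he : ∀ u ∈ Finset.range (c+1),
          (if t < u + 1 then c.choose (u+1-1) * (u+1-1).choose t else 0) = c.choose u * u.choose t := by
        intro u _
        simp only [Nat.add_sub_cancel]
        by_cases h : t < u + 1
        · rw [if_pos h]
        · rw [if_neg h, Nat.choose_eq_zero_of_lt (show u < t by omega), mul_zero]
      rw [Finset.sum_congr rfl he, sumIdN t c (by omega)]
    rw [first, second]
    have h2 : 2 ∣ c.choose t * 2^(c-t) :=
      Dvd.dvd.mul_left (dvd_pow_self 2 (by omega : c - t ≠ 0)) _
    omega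

theorem stmt3 (N k t lam : ℕ) (Y : Fin N → Fin k → ℤ)
    (hpm : isPM Y) (hoa : isOA2 N k t Y)
    (ht1 : 1 ≤ t) (htk : t ≤ k) (hN : N = lam * 2 ^ t) (hk : t + 2 ≤ k)
    (hlam : Odd lam) :
    ∀ l : Finset (Fin k), l.Nonempty →
      ∃ μ : ℤ, Jchar Y l = μ * 2 ^ t ∧
        μ % 2 = (if t < l.card then ((l.card - 1).choose (l.card - t - 1) : ℤ)
          else 0) % 2 := by
  intro l
  induction l using Finset.strongInduction with
  | _ l ih =>
    intro hne
    by_cases hcard : t < l.card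
    case neg =>
      refine ⟨0, by rw [JzeroC Y hpm hoa htk l hne (by omega), zero_mul], by rw [if_neg hcard]⟩
    case pos =>
      rw [if_pos hcard]
      set c := l.card with hc
      set n := (Finset.univ.filter (fun i : Fin N => ∀ j ∈ l, Y i j = 1)).card with hn
      have hA := expandA Y hpm l
      set 𝒮 := (l.powerset.erase l).filter (fun S => t < S.card) with h𝒮
      -- decompose the powerset sum
      have hsplit1 : ∑ S ∈ l.powerset, Jchar Y S
          = Jchar Y l + ∑ S ∈ l.powerset.erase l, Jchar Y S :=
        (Finset.add_sum_erase _ _ (Finset.mem_powerset_self l)).symm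
      have hsplit2 : ∑ S ∈ l.powerset.erase l, Jchar Y S
          = (∑ S ∈ 𝒮, Jchar Y S) + (N:ℤ) := by
        have hmemE : (∅ : Finset (Fin k)) ∈ (l.powerset.erase l).filter (fun S => ¬ t < S.card) := by
          rw [Finset.mem_filter, Finset.mem_erase]
          exact ⟨⟨Ne.symm hne.ne_empty, Finset.mem_powerset.mpr (Finset.empty_subset l)⟩, by simp⟩
        have hz : ∀ S' ∈ (l.powerset.erase l).filter (fun S => ¬ t < S.card),
            S' ∉ ({∅} : Finset (Finset (Fin k))) → Jchar Y S' = 0 := by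
          intro S' hS' hnot
          rw [Finset.mem_filter, Finset.mem_erase, Finset.mem_powerset] at hS'
          rw [Finset.mem_singleton] at hnot
          exact JzeroC Y hpm hoa htk S' (Finset.nonempty_iff_ne_empty.mpr hnot)
            (by omega)
        have hnotpart := Finset.sum_subset (Finset.singleton_subset_iff.mpr hmemE) hz
        rw [Finset.sum_singleton] at hnotpart
        have hJe : Jchar Y (∅ : Finset (Fin k)) = (N:ℤ) := by simp [Jchar]
        rw [h𝒮, ← Finset.sum_filter_add_sum_filter_not (l.powerset.erase l) (fun S => t < S.card),
          ← hnotpart, hJe]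
    -- induction hypotheses give μ for each S ∈ 𝒮
      have hg : ∀ S ∈ 𝒮, Jchar Y S = (Jchar Y S / 2^t) * 2^t ∧
          (Jchar Y S / 2^t) % 2 = (((S.card - 1).choose t : ℕ) : ℤ) % 2 := by
        intro S hS
        rw [h𝒮, Finset.mem_filter, Finset.mem_erase, Finset.mem_powerset] at hS
        obtain ⟨⟨hSne, hSsub⟩, hStc⟩ := hS
        have hss : S ⊂ l := Finset.ssubset_iff_subset_ne.mpr ⟨hSsub, hSne⟩
        have hSnonempty : S.Nonempty := Finset.card_pos.mp (by omega)
        obtain ⟨μS, hμ1, hμ2⟩ := ih S hss hSnonempty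
        rw [if_pos hStc] at hμ2
        have hdiv : Jchar Y S / 2^t = μS := by
          rw [hμ1, Int.mul_ediv_cancel _ (by positivity)]
        rw [hdiv, ← hμ1] at *
        refine ⟨hμ1, ?_⟩
        rw [hdiv, hμ2]
        congr 2
        rw [show S.card - t - 1 = (S.card - 1) - t by omega, Nat.choose_symm (by omega)]
      set G := ∑ S ∈ 𝒮, (Jchar Y S / 2^t) with hG
      have hGmul : G * 2^t = ∑ S ∈ 𝒮, Jchar Y S := by
        rw [hG, Finset.sum_mul]
        exact Finset.sum_congr rfl fun S hS => ((hg S hS).1).symm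
      refine ⟨(n:ℤ) * 2^(c - t) - (lam:ℤ) - G, ?_, ?_⟩
      · -- Jchar Y l = μ * 2^t
        have hpow : (2:ℤ)^(c-t) * 2^t = 2^c := by
          rw [← pow_add]
          congr 1
          omega
        have hNc : (N:ℤ) = (lam:ℤ) * 2^t := by exact_mod_cast congrArg (Nat.cast : ℕ → ℤ) hN
        have : Jchar Y l + ((∑ S ∈ 𝒮, Jchar Y S) + (N:ℤ)) = (n:ℤ) * 2^c := by
          rw [← hsplit2, ← hsplit1, hA]
        rw [sub_mul, sub_mul, mul_assoc, hpow, hGmul, hNc] at *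
        linarith
      · -- parity
        -- relate G to the natural number sum
        set T1 := ∑ S ∈ 𝒮, (S.card - 1).choose t with hT1
        have hGmod : G % 2 = (T1:ℤ) % 2 := by
          rw [hG, hT1, Nat.cast_sum 𝒮 (fun S => (S.card - 1).choose t), Finset.sum_int_mod,
            Finset.sum_congr rfl (fun S hS => (hg S hS).2), ← Finset.sum_int_mod]
        -- T1 + choose(c-1,t) = T2
        set 𝒮' := l.powerset.filter (fun S => t < S.card) with h𝒮'
        have h𝒮e : 𝒮 = 𝒮'.erase l := by
          rw [h𝒮, h𝒮', Finset.filter_erase]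
        have hl𝒮' : l ∈ 𝒮' := by
          rw [h𝒮', Finset.mem_filter]
          exact ⟨Finset.mem_powerset_self l, hcard⟩
        have hT12 : (c - 1).choose t + T1 = ∑ S ∈ 𝒮', (S.card - 1).choose t := by
          rw [hT1, h𝒮e, hc]
          exact Finset.add_sum_erase 𝒮' (fun S => (S.card - 1).choose t) hl𝒮'
        -- T2 equals the range sum
        have hT2 : ∑ S ∈ 𝒮', (S.card - 1).choose t
            = ∑ s ∈ Finset.range (c+1), (if t < s then c.choose s * (s-1).choose t else 0) := by
          rw [h𝒮', Finset.sum_filter]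
          have := Finset.sum_powerset_apply_card
            (f := fun m => if t < m then (m - 1).choose t else 0) (x := l)
          rw [this]
          refine Finset.sum_congr rfl fun s _ => ?_
          rw [smul_eq_mul, mul_ite, mul_zero]
        have hT2odd := fOddN t c hcard
        rw [← hT2] at hT2odd
        -- now finish with omega
        have hnmod : ((n:ℤ) * 2^(c-t)) % 2 = 0 := by
          have h1 : c - t = (c - t - 1) + 1 := by omega
          rw [h1, pow_succ, ← mul_assoc]
          exact Int.mul_emod_left _ _
        have hlm : lam % 2 = 1 := Nat.odd_iff.mp hlam
        have hch : (c - 1).choose (c - t - 1) = (c - 1).choose t := by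
          rw [show c - t - 1 = (c - 1) - t by omega, Nat.choose_symm (by omega)]
        rw [hch]
        omega
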